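/- Let t ≥ 1, n = 2^t, y = (y₁, y₂) ∈ ℝ^{2n}, and suppose x = (x₁, x₂) ∈ BW_{2n} satisfies ‖y − x‖² < d(BW_{2n})/4. Then v = x₂ − x₁ is the unique point of RBW_n with ‖(y₂ − x₁) − v‖² < d(RBW_n)/4, and symmetrically x₁ − x₂ is the unique point w of RBW_n with ‖(y₁ − x₂) − w‖² < d(RBW_n)/4. -/

import Mathlib

open Matrix

noncomputable section

/-- `Rmat n` is the `n × n` matrix `I_{n/2} ⊗ R(2)`, block diagonal with
`2 × 2` blocks `[[1, 1], [1, -1]]`, acting on row vectors on the right. -/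
def Rmat (n : ℕ) : Matrix (Fin n) (Fin n) ℝ :=
  Matrix.of fun i j =>
    if (i : ℕ) / 2 = (j : ℕ) / 2 then
      if (i : ℕ) % 2 = 1 ∧ (j : ℕ) % 2 = 1 then -1 else 1
    else 0

/-- Concatenation `(u, v)` of two `2^t`-dimensional vectors into a
`2^(t+1)`-dimensional vector. -/
def concat {t : ℕ} (u v : Fin (2 ^ t) → ℝ) : Fin (2 ^ (t + 1)) → ℝ := fun i =>
  if h : (i : ℕ) < 2 ^ t then u ⟨i, h⟩
  else v ⟨(i : ℕ) - 2 ^ t, by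
    have hi := i.isLt
    have h2 : 2 ^ (t + 1) = 2 ^ t + 2 ^ t := by rw [pow_succ]; ring
    omega⟩

/-- The Barnes–Wall lattices `BW_{2^t} ⊆ ℝ^{2^t}`, defined recursively by
`BW_2 = ℤ²` and `BW_{2n} = {(u, u + v) : u ∈ BW_n, v ∈ BW_n · R(n)}`. -/
def BW : ∀ t : ℕ, Set (Fin (2 ^ t) → ℝ)
  | 0 => {x | ∀ i, ∃ z : ℤ, x i = (z : ℝ)}
  | (t + 1) =>
    {x | ∃ u v : Fin (2 ^ t) → ℝ, u ∈ BW t ∧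
      (∃ w ∈ BW t, v = Matrix.vecMul w (Rmat (2 ^ t))) ∧ x = concat u (u + v)}

/-- `RBW_n = {x · R(n) : x ∈ BW_n}`. -/
def RBW (t : ℕ) : Set (Fin (2 ^ t) → ℝ) :=
  (fun x => Matrix.vecMul x (Rmat (2 ^ t))) '' BW t

/-- Squared Euclidean norm. -/
def sqnorm {m : ℕ} (x : Fin m → ℝ) : ℝ := ∑ i, x i ^ 2

/-- `minDist Λ` is the minimum of `‖x‖²` over nonzero `x ∈ Λ`. -/
def minDist {m : ℕ} (Λ : Set (Fin m → ℝ)) : ℝ :=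
  sInf (sqnorm '' {x ∈ Λ | x ≠ 0})

-- auxiliary lemmas

lemma two_pow_succ (t : ℕ) : 2 ^ (t + 1) = 2 ^ t + 2 ^ t := by rw [pow_succ]; ring

def loIdx {t : ℕ} (i : Fin (2 ^ t)) : Fin (2 ^ (t + 1)) :=
  ⟨i, by have := i.isLt; have := two_pow_succ t; omega⟩

def hiIdx {t : ℕ} (i : Fin (2 ^ t)) : Fin (2 ^ (t + 1)) :=
  ⟨2 ^ t + i, by have := i.isLt; have := two_pow_succ t; omega⟩

lemma concat_lo {t : ℕ} (u v : Fin (2 ^ t) → ℝ) (i : Fin (2 ^ t)) :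
    concat u v (loIdx i) = u i := by
  simp [concat, loIdx, i.isLt]

lemma concat_hi {t : ℕ} (u v : Fin (2 ^ t) → ℝ) (i : Fin (2 ^ t)) :
    concat u v (hiIdx i) = v i := by
  have h : ¬ ((hiIdx i : ℕ) < 2 ^ t) := by simp [hiIdx]
  simp only [concat, dif_neg h]
  congr 1
  ext
  simp [hiIdx]

lemma concat_inj {t : ℕ} {a b c d : Fin (2 ^ t) → ℝ} (h : concat a b = concat c d) :
    a = c ∧ b = d := by
  constructor
  · funext i
    have := congrFun h (loIdx i)
    rwa [concat_lo, concat_lo] at this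
  · funext i
    have := congrFun h (hiIdx i)
    rwa [concat_hi, concat_hi] at this

lemma concat_sub {t : ℕ} (a b c d : Fin (2 ^ t) → ℝ) :
    concat a b - concat c d = concat (a - c) (b - d) := by
  funext i
  simp only [Pi.sub_apply, concat]
  split <;> simp

lemma concat_zero {t : ℕ} : concat (0 : Fin (2 ^ t) → ℝ) 0 = 0 := by
  funext i
  simp only [concat]
  split <;> rfl

lemma sqnorm_nonneg {m : ℕ} (x : Fin m → ℝ) : 0 ≤ sqnorm x :=
  Finset.sum_nonneg fun i _ => sq_nonneg _

lemma sqnorm_concat {t : ℕ} (a b : Fin (2 ^ t) → ℝ) :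
    sqnorm (concat a b) = sqnorm a + sqnorm b := by
  classical
  unfold sqnorm
  have h := two_pow_succ t
  have key : ∑ j : Fin (2 ^ (t + 1)), concat a b j ^ 2 =
      ∑ j : Fin (2 ^ t + 2 ^ t), concat a b (finCongr h.symm j) ^ 2 :=
    Fintype.sum_equiv (finCongr h) _ _ (fun x => by simp)
  rw [key, Fin.sum_univ_add]
  congr 1
  · apply Finset.sum_congr rfl
    intro i _
    have : (finCongr h.symm (Fin.castAdd (2 ^ t) i)) = loIdx i := by
      ext; simp [loIdx]
    rw [this, concat_lo]
  · apply Finset.sum_congr rfl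
    intro i _
    have : (finCongr h.symm (Fin.natAdd (2 ^ t) i)) = hiIdx i := by
      ext; simp [hiIdx]; omega
    rw [this, concat_hi]

lemma BW_zero_mem : ∀ t, (0 : Fin (2 ^ t) → ℝ) ∈ BW t := by
  intro t
  induction t with
  | zero => intro i; exact ⟨0, by simp⟩
  | succ t ih =>
    exact ⟨0, 0, ih, ⟨0, ih, by simp⟩, by simpa using concat_zero.symm⟩

lemma BW_sub : ∀ t, ∀ a ∈ BW t, ∀ b ∈ BW t, a - b ∈ BW t := by
  intro t
  induction t with
  | zero =>
    intro a ha b hb i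
    obtain ⟨z1, hz1⟩ := ha i
    obtain ⟨z2, hz2⟩ := hb i
    exact ⟨z1 - z2, by simp [hz1, hz2]⟩
  | succ t ih =>
    rintro a ⟨u, v, hu, ⟨w, hw, hv⟩, rfl⟩ b ⟨u', v', hu', ⟨w', hw', hv'⟩, rfl⟩
    refine ⟨u - u', v - v', ih u hu u' hu', ⟨w - w', ih w hw w' hw', ?_⟩, ?_⟩
    · rw [hv, hv', Matrix.sub_vecMul]
    · rw [concat_sub]
      congr 1
      abel

lemma BW_ones : ∀ t, (fun _ => (1 : ℝ)) ∈ BW t := by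
  intro t
  induction t with
  | zero => intro i; exact ⟨1, by simp⟩
  | succ t ih =>
    refine ⟨fun _ => 1, 0, ih, ⟨0, BW_zero_mem t, by simp⟩, ?_⟩
    funext i
    simp only [concat, add_zero]
    split <;> rfl

lemma RBW_sub {t : ℕ} {a b : Fin (2 ^ t) → ℝ} (ha : a ∈ RBW t) (hb : b ∈ RBW t) :
    a - b ∈ RBW t := by
  obtain ⟨x, hx, rfl⟩ := ha
  obtain ⟨y, hy, rfl⟩ := hb
  exact ⟨x - y, BW_sub t x hx y hy, by
    show (x - y) ᵥ* Rmat (2 ^ t) = x ᵥ* Rmat (2 ^ t) - y ᵥ* Rmat (2 ^ t)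
    rw [Matrix.sub_vecMul]⟩

lemma minDist_bddBelow {m : ℕ} (Λ : Set (Fin m → ℝ)) :
    BddBelow (sqnorm '' {x ∈ Λ | x ≠ 0}) := by
  refine ⟨0, ?_⟩
  rintro s ⟨x, _, rfl⟩
  exact sqnorm_nonneg x

lemma minDist_le {m : ℕ} {Λ : Set (Fin m → ℝ)} {x : Fin m → ℝ} (hx : x ∈ Λ) (hx0 : x ≠ 0) :
    minDist Λ ≤ sqnorm x :=
  csInf_le (minDist_bddBelow Λ) ⟨x, ⟨hx, hx0⟩, rfl⟩

/-- A nonzero element of `RBW t` for `t ≥ 1`. -/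
lemma RBW_exists_nonzero {t : ℕ} (ht : 1 ≤ t) : ∃ z ∈ RBW t, z ≠ 0 := by
  have h2t : 2 ≤ 2 ^ t := by
    calc 2 = 2 ^ 1 := by norm_num
    _ ≤ 2 ^ t := Nat.pow_le_pow_right (by norm_num) ht
  refine ⟨Matrix.vecMul (fun _ => 1) (Rmat (2 ^ t)), ⟨fun _ => 1, BW_ones t, rfl⟩, ?_⟩
  intro h
  set j0 : Fin (2 ^ t) := ⟨0, by omega⟩ with hj0
  have hval : Matrix.vecMul (fun _ => (1:ℝ)) (Rmat (2 ^ t)) j0 = 0 := by rw [h]; rfl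
  have hsum : Matrix.vecMul (fun _ => (1:ℝ)) (Rmat (2 ^ t)) j0 =
      ∑ i : Fin (2 ^ t), Rmat (2 ^ t) i j0 := by
    simp [Matrix.vecMul, dotProduct]
  set i0 : Fin (2 ^ t) := ⟨0, by omega⟩
  set i1 : Fin (2 ^ t) := ⟨1, by omega⟩
  have hne : i0 ≠ i1 := by simp [i0, i1, Fin.ext_iff]
  have hnonneg : ∀ i : Fin (2 ^ t), (0:ℝ) ≤ Rmat (2 ^ t) i j0 := by
    intro i
    simp only [Rmat, Matrix.of_apply, hj0]
    split
    · split
      · simp_all [i0]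
      · norm_num
    · exact le_refl 0
  have hpair : ∑ i ∈ ({i0, i1} : Finset (Fin (2 ^ t))), Rmat (2 ^ t) i j0 = 2 := by
    rw [Finset.sum_pair hne]
    simp [Rmat, i0, i1, hj0]
    norm_num
  have hge : (2:ℝ) ≤ ∑ i : Fin (2 ^ t), Rmat (2 ^ t) i j0 := by
    rw [← hpair]
    exact Finset.sum_le_sum_of_subset_of_nonneg (Finset.subset_univ _)
      (fun i _ _ => hnonneg i)
  rw [hsum] at hval
  linarith

lemma minDist_BW_le_RBW {t : ℕ} (ht : 1 ≤ t) :
    minDist (BW (t + 1)) ≤ minDist (RBW t) := by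
  obtain ⟨z, hz, hz0⟩ := RBW_exists_nonzero ht
  have hnonempty : (sqnorm '' {x ∈ RBW t | x ≠ 0}).Nonempty :=
    ⟨sqnorm z, z, ⟨hz, hz0⟩, rfl⟩
  unfold minDist
  apply le_csInf hnonempty
  rintro s ⟨v, ⟨hv, hv0⟩, rfl⟩
  have hmem : concat 0 v ∈ BW (t + 1) := by
    obtain ⟨w, hw, rfl⟩ := hv
    exact ⟨0, _, BW_zero_mem t, ⟨w, hw, rfl⟩, by rw [zero_add]⟩
  have hne : concat (0 : Fin (2 ^ t) → ℝ) v ≠ 0 := by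
    intro h
    apply hv0
    funext i
    have hc := congrFun h (hiIdx i)
    rw [concat_hi] at hc
    exact hc
  have hle : minDist (BW (t + 1)) ≤ sqnorm (concat 0 v) := minDist_le hmem hne
  have heq : sqnorm (concat (0 : Fin (2 ^ t) → ℝ) v) = sqnorm v := by
    rw [sqnorm_concat]
    simp [sqnorm]
  unfold minDist at hle
  rw [heq] at hle
  exact hle

lemma unique_close {m : ℕ} (Λ : Set (Fin m → ℝ))
    (hsub : ∀ a ∈ Λ, ∀ b ∈ Λ, a - b ∈ Λ)
    (g z : Fin m → ℝ) (hz : z ∈ Λ) (hzc : sqnorm (g - z) < minDist Λ / 4) :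
    ∀ v, (v ∈ Λ ∧ sqnorm (g - v) < minDist Λ / 4) ↔ v = z := by
  intro v
  constructor
  · rintro ⟨hv, hvc⟩
    by_contra hne
    have hd : v - z ∈ Λ := hsub v hv z hz
    have hd0 : v - z ≠ 0 := sub_ne_zero.mpr hne
    have h1 : minDist Λ ≤ sqnorm (v - z) := minDist_le hd hd0
    have h2 : sqnorm (v - z) ≤ 2 * sqnorm (g - v) + 2 * sqnorm (g - z) := by
      unfold sqnorm
      rw [Finset.mul_sum, Finset.mul_sum, ← Finset.sum_add_distrib]
      apply Finset.sum_le_sum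
      intro i _
      simp only [Pi.sub_apply]
      nlinarith [sq_nonneg ((g i - z i) + (g i - v i))]
    linarith
  · rintro rfl
    exact ⟨hz, hzc⟩

/-- If `x = (x₁,x₂) ∈ BW_{2n}` and `‖y − x‖² < d(BW_{2n})/4`, then
`x₂ − x₁` is the unique point `v ∈ RBW_n` with `‖(y₂ − x₁) − v‖² < d(RBW_n)/4`,
and symmetrically `x₁ − x₂` is the unique point `w ∈ RBW_n` with
`‖(y₁ − x₂) − w‖² < d(RBW_n)/4`. -/
theorem bw_unique_difference_decoding :
    ∀ t : ℕ, 1 ≤ t → ∀ y₁ y₂ x₁ x₂ : Fin (2 ^ t) → ℝ,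
      concat x₁ x₂ ∈ BW (t + 1) →
      sqnorm (concat y₁ y₂ - concat x₁ x₂) < minDist (BW (t + 1)) / 4 →
      (∀ v : Fin (2 ^ t) → ℝ,
        (v ∈ RBW t ∧ sqnorm (y₂ - x₁ - v) < minDist (RBW t) / 4) ↔ v = x₂ - x₁) ∧
      (∀ w : Fin (2 ^ t) → ℝ,
        (w ∈ RBW t ∧ sqnorm (y₁ - x₂ - w) < minDist (RBW t) / 4) ↔ w = x₁ - x₂) := by
  intro t ht y₁ y₂ x₁ x₂ hx hclose
  obtain ⟨u, v, hu, ⟨w, hw, hveq⟩, hxeq⟩ := hx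
  have h1 : x₁ = u := (concat_inj hxeq).1
  have h2 : x₂ = u + v := (concat_inj hxeq).2
  have hvRBW : v ∈ RBW t := ⟨w, hw, hveq.symm⟩
  have hvx : x₂ - x₁ = v := by rw [h1, h2]; abel
  have hz1 : x₂ - x₁ ∈ RBW t := by rw [hvx]; exact hvRBW
  have h0 : (0 : Fin (2 ^ t) → ℝ) ∈ RBW t := ⟨0, BW_zero_mem t, Matrix.zero_vecMul _⟩
  have hz2 : x₁ - x₂ ∈ RBW t := by
    have : x₁ - x₂ = 0 - (x₂ - x₁) := by abel
    rw [this]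
    exact RBW_sub h0 hz1
  have hsplit : sqnorm (concat y₁ y₂ - concat x₁ x₂) =
      sqnorm (y₁ - x₁) + sqnorm (y₂ - x₂) := by
    rw [concat_sub, sqnorm_concat]
  have hle := minDist_BW_le_RBW ht
  have hn1 := sqnorm_nonneg (y₁ - x₁)
  have hn2 := sqnorm_nonneg (y₂ - x₂)
  rw [hsplit] at hclose
  have hc1 : sqnorm (y₁ - x₁) < minDist (RBW t) / 4 := by linarith
  have hc2 : sqnorm (y₂ - x₂) < minDist (RBW t) / 4 := by linarith
  constructor
  · exact unique_close (RBW t) (fun a ha b hb => RBW_sub ha hb)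
      (y₂ - x₁) (x₂ - x₁) hz1
      (by have h : y₂ - x₁ - (x₂ - x₁) = y₂ - x₂ := by abel
          rw [h]; exact hc2)
  · exact unique_close (RBW t) (fun a ha b hb => RBW_sub ha hb)
      (y₁ - x₂) (x₁ - x₂) hz2
      (by have h : y₁ - x₂ - (x₁ - x₂) = y₁ - x₁ := by abel
          rw [h]; exact hc1)
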